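/- For any 5×5 stochastic matrix ℙ with strictly positive entries, there exists a unique probability vector π (π ≥ 0, entries summing to 1) with πℙ = π, and for every probability vector X, Xℙⁿ → π as n → ∞. -/

import Mathlib

open Filter Topology

private noncomputable def Mcol (P : Matrix (Fin 5) (Fin 5) ℝ) (j : Fin 5) (n : ℕ) : ℝ :=
  Finset.univ.sup' ⟨0, Finset.mem_univ 0⟩ (fun i => (P ^ n) i j)

private noncomputable def mcol (P : Matrix (Fin 5) (Fin 5) ℝ) (j : Fin 5) (n : ℕ) : ℝ :=
  Finset.univ.inf' ⟨0, Finset.mem_univ 0⟩ (fun i => (P ^ n) i j)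

/-- Ergodic theorem for a 5×5 positive stochastic matrix: there is a unique
stationary probability vector π, and Xℙⁿ → π for every probability vector X. -/
theorem ergodic_positive_stochastic (P : Matrix (Fin 5) (Fin 5) ℝ)
    (hpos : ∀ i j, 0 < P i j) (hrow : ∀ i, ∑ j, P i j = 1) :
    ∃ π : Fin 5 → ℝ,
      ((∀ i, 0 ≤ π i) ∧ (∑ i, π i = 1) ∧ Matrix.vecMul π P = π) ∧
      (∀ π' : Fin 5 → ℝ,
        ((∀ i, 0 ≤ π' i) ∧ (∑ i, π' i = 1) ∧ Matrix.vecMul π' P = π') → π' = π) ∧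
      (∀ X : Fin 5 → ℝ, (∀ i, 0 ≤ X i) → (∑ i, X i = 1) →
        ∀ j, Tendsto (fun n => Matrix.vecMul X (P ^ n) j) atTop (𝓝 (π j))) := by
  classical
  set ε : ℝ := Finset.univ.inf' ⟨(0, 0), Finset.mem_univ _⟩
      (fun p : Fin 5 × Fin 5 => P p.1 p.2) with hεdef
  have hεpos : 0 < ε := by
    rw [hεdef]; refine (Finset.lt_inf'_iff _).2 ?_
    exact fun p _ => hpos p.1 p.2
  have hεle : ∀ i j, ε ≤ P i j := fun i j =>
    Finset.inf'_le _ (Finset.mem_univ (i, j))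
  have h5ε : 5 * ε ≤ 1 := by
    have h : ∑ j : Fin 5, ε ≤ ∑ j, P 0 j := Finset.sum_le_sum fun j _ => hεle 0 j
    rw [hrow 0, Finset.sum_const, Finset.card_univ, Fintype.card_fin, nsmul_eq_mul] at h
    push_cast at h
    linarith
  -- basic facts about powers
  have hPn : ∀ n : ℕ, (∀ i j, 0 ≤ (P ^ n) i j) ∧ (∀ i, ∑ j, (P ^ n) i j = 1) := by
    intro n
    induction n with
    | zero =>
      constructor
      · intro i j
        simp only [pow_zero, Matrix.one_apply]
        split <;> norm_num
      · intro i
        simp [pow_zero, Matrix.one_apply]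
    | succ n ih =>
      have hmul : ∀ i j, (P ^ (n + 1)) i j = ∑ k, (P ^ n) i k * P k j := by
        intro i j; rw [pow_succ, Matrix.mul_apply]
      constructor
      · intro i j
        rw [hmul]
        exact Finset.sum_nonneg fun k _ => mul_nonneg (ih.1 i k) (hpos k j).le
      · intro i
        simp_rw [hmul]
        rw [Finset.sum_comm]
        calc ∑ k, ∑ j, (P ^ n) i k * P k j
            = ∑ k, (P ^ n) i k * ∑ j, P k j := by simp [Finset.mul_sum]
          _ = 1 := by simp [hrow, ih.2 i]
  have hPn0 : ∀ n i j, 0 ≤ (P ^ n) i j := fun n => (hPn n).1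
  have hProw : ∀ n i, ∑ j, (P ^ n) i j = 1 := fun n => (hPn n).2
  have hmul : ∀ n i j, (P ^ (n + 1)) i j = ∑ k, (P ^ n) i k * P k j := by
    intro n i j; rw [pow_succ, Matrix.mul_apply]
  have hmul' : ∀ n i j, (P ^ (n + 1)) i j = ∑ k, P i k * (P ^ n) k j := by
    intro n i j; rw [pow_succ', Matrix.mul_apply]
  -- column max/min
  have h_le_M : ∀ j n i, (P ^ n) i j ≤ Mcol P j n := by
    intro j n i
    unfold Mcol
    exact Finset.le_sup' (fun i => (P ^ n) i j) (Finset.mem_univ i)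
  have h_m_le : ∀ j n i, mcol P j n ≤ (P ^ n) i j := by
    intro j n i
    unfold mcol
    exact Finset.inf'_le (fun i => (P ^ n) i j) (Finset.mem_univ i)
  have h_m_le_M : ∀ j n, mcol P j n ≤ Mcol P j n := fun j n =>
    (h_m_le j n 0).trans (h_le_M j n 0)
  have h_m_nonneg : ∀ j n, 0 ≤ mcol P j n := by
    intro j n
    unfold mcol
    exact Finset.le_inf' _ _ fun i _ => hPn0 n i j
  have h_M_le_one : ∀ j n, Mcol P j n ≤ 1 := by
    intro j n
    unfold Mcol
    apply Finset.sup'_le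
    intro i _
    calc (P ^ n) i j ≤ ∑ k, (P ^ n) i k :=
          Finset.single_le_sum (fun k _ => hPn0 n i k) (Finset.mem_univ j)
      _ = 1 := hProw n i
  have hsum_sub : ∀ i, ∑ k : Fin 5, (P i k - ε) = 1 - 5 * ε := by
    intro i
    rw [Finset.sum_sub_distrib, hrow i, Finset.sum_const, Finset.card_univ,
      Fintype.card_fin, nsmul_eq_mul]
    push_cast
    ring
  -- key one-step bounds
  have key_up : ∀ j n i, (P ^ (n + 1)) i j ≤
      (1 - 5 * ε) * Mcol P j n + ε * ∑ k, (P ^ n) k j := by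
    intro j n i
    rw [hmul']
    have h1 : ∀ k, P i k * (P ^ n) k j ≤ (P i k - ε) * Mcol P j n + ε * (P ^ n) k j := by
      intro k
      have he : (0 : ℝ) ≤ P i k - ε := by linarith [hεle i k]
      nlinarith [mul_le_mul_of_nonneg_left (h_le_M j n k) he]
    calc ∑ k, P i k * (P ^ n) k j
        ≤ ∑ k, ((P i k - ε) * Mcol P j n + ε * (P ^ n) k j) :=
          Finset.sum_le_sum fun k _ => h1 k
      _ = (∑ k, (P i k - ε)) * Mcol P j n + ε * ∑ k, (P ^ n) k j := by
          rw [Finset.sum_add_distrib, ← Finset.sum_mul, ← Finset.mul_sum]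
      _ = (1 - 5 * ε) * Mcol P j n + ε * ∑ k, (P ^ n) k j := by rw [hsum_sub i]
  have key_down : ∀ j n i,
      (1 - 5 * ε) * mcol P j n + ε * ∑ k, (P ^ n) k j ≤ (P ^ (n + 1)) i j := by
    intro j n i
    rw [hmul']
    have h1 : ∀ k, (P i k - ε) * mcol P j n + ε * (P ^ n) k j ≤ P i k * (P ^ n) k j := by
      intro k
      have he : (0 : ℝ) ≤ P i k - ε := by linarith [hεle i k]
      nlinarith [mul_le_mul_of_nonneg_left (h_m_le j n k) he]
    calc (1 - 5 * ε) * mcol P j n + ε * ∑ k, (P ^ n) k j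
        = (∑ k, (P i k - ε)) * mcol P j n + ε * ∑ k, (P ^ n) k j := by rw [hsum_sub i]
      _ = ∑ k, ((P i k - ε) * mcol P j n + ε * (P ^ n) k j) := by
          rw [Finset.sum_add_distrib, ← Finset.sum_mul, ← Finset.mul_sum]
      _ ≤ ∑ k, P i k * (P ^ n) k j := Finset.sum_le_sum fun k _ => h1 k
  have gap_step : ∀ j n,
      Mcol P j (n + 1) - mcol P j (n + 1) ≤ (1 - 5 * ε) * (Mcol P j n - mcol P j n) := by
    intro j n
    have hub : Mcol P j (n + 1) ≤ (1 - 5 * ε) * Mcol P j n + ε * ∑ k, (P ^ n) k j := by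
      unfold Mcol
      exact Finset.sup'_le _ _ fun i _ => key_up j n i
    have hlb : (1 - 5 * ε) * mcol P j n + ε * ∑ k, (P ^ n) k j ≤ mcol P j (n + 1) := by
      unfold mcol
      exact Finset.le_inf' _ _ fun i _ => key_down j n i
    calc Mcol P j (n + 1) - mcol P j (n + 1)
        ≤ ((1 - 5 * ε) * Mcol P j n + ε * ∑ k, (P ^ n) k j)
          - ((1 - 5 * ε) * mcol P j n + ε * ∑ k, (P ^ n) k j) := sub_le_sub hub hlb
      _ = (1 - 5 * ε) * (Mcol P j n - mcol P j n) := by ring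
  have hc0 : (0 : ℝ) ≤ 1 - 5 * ε := by linarith
  have hc1 : 1 - 5 * ε < 1 := by linarith
  have gap_n : ∀ j n, Mcol P j n - mcol P j n ≤
      (1 - 5 * ε) ^ n * (Mcol P j 0 - mcol P j 0) := by
    intro j n
    induction n with
    | zero => simp
    | succ n ih =>
      calc Mcol P j (n + 1) - mcol P j (n + 1)
          ≤ (1 - 5 * ε) * (Mcol P j n - mcol P j n) := gap_step j n
        _ ≤ (1 - 5 * ε) * ((1 - 5 * ε) ^ n * (Mcol P j 0 - mcol P j 0)) :=
            mul_le_mul_of_nonneg_left ih hc0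
        _ = (1 - 5 * ε) ^ (n + 1) * (Mcol P j 0 - mcol P j 0) := by rw [pow_succ]; ring
  have hgap0 : ∀ j, Tendsto (fun n => Mcol P j n - mcol P j n) atTop (𝓝 0) := by
    intro j
    have h1 : Tendsto (fun n : ℕ => (1 - 5 * ε) ^ n * (Mcol P j 0 - mcol P j 0))
        atTop (𝓝 0) := by
      have := (tendsto_pow_atTop_nhds_zero_of_lt_one hc0 hc1).mul_const
        (Mcol P j 0 - mcol P j 0)
      simpa using this
    exact squeeze_zero (fun n => by linarith [h_m_le_M j n]) (fun n => gap_n j n) h1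
  have hmono : ∀ j, Monotone (mcol P j) := by
    intro j
    apply monotone_nat_of_le_succ
    intro n
    show mcol P j n ≤ mcol P j (n + 1)
    unfold mcol
    refine Finset.le_inf' _ _ fun i _ => ?_
    show mcol P j n ≤ (P ^ (n + 1)) i j
    rw [hmul' n i j]
    calc mcol P j n = (∑ k, P i k) * mcol P j n := by rw [hrow i, one_mul]
      _ = ∑ k, P i k * mcol P j n := by rw [Finset.sum_mul]
      _ ≤ ∑ k, P i k * (P ^ n) k j :=
          Finset.sum_le_sum fun k _ => mul_le_mul_of_nonneg_left (h_m_le j n k) (hpos i k).le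
  have hbdd : ∀ j, BddAbove (Set.range (mcol P j)) := by
    intro j
    refine ⟨1, ?_⟩
    rintro x ⟨n, rfl⟩
    exact (h_m_le_M j n).trans (h_M_le_one j n)
  set π : Fin 5 → ℝ := fun j => ⨆ n, mcol P j n with hπdef
  have htendm : ∀ j, Tendsto (mcol P j) atTop (𝓝 (π j)) := fun j =>
    tendsto_atTop_ciSup (hmono j) (hbdd j)
  have htendM : ∀ j, Tendsto (Mcol P j) atTop (𝓝 (π j)) := by
    intro j
    have := (htendm j).add (hgap0 j)
    simpa using this
  have h_entry : ∀ i j, Tendsto (fun n => (P ^ n) i j) atTop (𝓝 (π j)) := by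
    intro i j
    exact tendsto_of_tendsto_of_tendsto_of_le_of_le (htendm j) (htendM j)
      (fun n => h_m_le j n i) (fun n => h_le_M j n i)
  have hvec : ∀ (X : Fin 5 → ℝ) n j,
      Matrix.vecMul X (P ^ n) j = ∑ i, X i * (P ^ n) i j := by
    intro X n j
    simp [Matrix.vecMul, dotProduct]
  have hlim : ∀ X : Fin 5 → ℝ, (∀ i, 0 ≤ X i) → (∑ i, X i = 1) →
      ∀ j, Tendsto (fun n => Matrix.vecMul X (P ^ n) j) atTop (𝓝 (π j)) := by
    intro X hX hXs j
    have h2 : Tendsto (fun n => ∑ i, X i * (P ^ n) i j) atTop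
        (𝓝 (∑ i, X i * π j)) :=
      tendsto_finset_sum _ fun i _ => (h_entry i j).const_mul (X i)
    have h3 : ∑ i, X i * π j = π j := by rw [← Finset.sum_mul, hXs, one_mul]
    rw [h3] at h2
    simpa only [hvec X] using h2
  refine ⟨π, ⟨?_, ?_, ?_⟩, ?_, hlim⟩
  · -- nonneg
    intro j
    exact (h_m_nonneg j 0).trans (le_ciSup (hbdd j) 0)
  · -- sum = 1
    have h1 : Tendsto (fun n => ∑ j, (P ^ n) 0 j) atTop (𝓝 (∑ j, π j)) :=
      tendsto_finset_sum _ fun j _ => h_entry 0 j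
    have h2 : Tendsto (fun n : ℕ => (1 : ℝ)) atTop (𝓝 (∑ j, π j)) := by
      simpa only [hProw] using h1
    exact tendsto_nhds_unique h2 tendsto_const_nhds
  · -- stationarity
    funext j
    have hA : Tendsto (fun n => (P ^ (n + 1)) 0 j) atTop (𝓝 (π j)) :=
      (h_entry 0 j).comp (tendsto_add_atTop_nat 1)
    have hB : Tendsto (fun n => ∑ k, (P ^ n) 0 k * P k j) atTop
        (𝓝 (∑ k, π k * P k j)) :=
      tendsto_finset_sum _ fun k _ => (h_entry 0 k).mul_const (P k j)
    simp only [hmul] at hA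
    have : (∑ k, π k * P k j) = π j := tendsto_nhds_unique hB hA
    rw [← this]
    simp [Matrix.vecMul, dotProduct]
  · -- uniqueness
    rintro π' ⟨h0, h1, h2⟩
    have hstat : ∀ n, Matrix.vecMul π' (P ^ n) = π' := by
      intro n
      induction n with
      | zero => simp
      | succ n ih => rw [pow_succ, ← Matrix.vecMul_vecMul, ih, h2]
    funext j
    have := hlim π' h0 h1 j
    simp only [hstat] at this
    exact tendsto_nhds_unique tendsto_const_nhds this
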